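/- Let n ≥ 1 and let k ≠ l be integers with 0 ≤ k, l ≤ n. Let α, β ∈ (0,1) be reals with α + β = 1 such that m := kα + lβ is an integer belonging to {0, …, n}. Then for every λ ∈ Γ_k ∩ Γ_l one has P_m(λ) ≥ P_k(λ)^α · P_l(λ)^β, and equality holds if and only if λ₁ = λ₂ = ⋯ = λ_n. -/

import Mathlib

/-- The normalized `k`-th elementary symmetric function
`P_k(λ) = binom(n,k)⁻¹ · Σ_{1 ≤ i₁ < ⋯ < i_k ≤ n} λ_{i₁} ⋯ λ_{i_k}`. -/
noncomputable def normESymm (n k : ℕ) (lam : Fin n → ℝ) : ℝ :=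
  ((n.choose k : ℝ))⁻¹ * ∑ s ∈ Finset.univ.powersetCard k, ∏ i ∈ s, lam i

/-- The Gårding cone `Γ_k = {λ ∈ ℝⁿ : P_i(λ) > 0, i = 1, …, k}`. -/
def gardingCone (n k : ℕ) : Set (Fin n → ℝ) :=
  {lam | ∀ i : ℕ, 1 ≤ i → i ≤ k → 0 < normESymm n i lam}

lemma normESymm_zero (n : ℕ) (lam : Fin n → ℝ) : normESymm n 0 lam = 1 := by
  simp [normESymm]

lemma normESymm_eq_esymm (n k : ℕ) (lam : Fin n → ℝ) :
    normESymm n k lam = ((n.choose k : ℝ))⁻¹ * (Multiset.map lam Finset.univ.val).esymm k := by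
  rw [normESymm, Finset.esymm_map_val]

lemma sum_powersetCard_one {ι : Type*} (s : Finset ι) (f : ι → ℝ) :
    ∑ t ∈ s.powersetCard 1, ∏ i ∈ t, f i = ∑ i ∈ s, f i := by
  rw [Finset.powersetCard_one, Finset.sum_map]
  simp

lemma sum_powersetCard_two {ι : Type*} [DecidableEq ι] (s : Finset ι) (f : ι → ℝ) :
    2 * ∑ t ∈ s.powersetCard 2, ∏ i ∈ t, f i = (∑ i ∈ s, f i) ^ 2 - ∑ i ∈ s, f i ^ 2 := by
  induction s using Finset.induction_on with
  | empty =>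
    rw [Finset.powersetCard_eq_empty.mpr (by simp)]; simp
  | @insert a s ha ih =>
    rw [Finset.powersetCard_succ_insert ha, Finset.sum_union, Finset.sum_image, Finset.sum_insert ha]
    · have h1 : ∀ t ∈ s.powersetCard 1, ∏ i ∈ insert a t, f i = f a * ∏ i ∈ t, f i := by
        intro t ht
        rw [Finset.mem_powersetCard] at ht
        exact Finset.prod_insert (fun hat => ha (ht.1 hat))
      rw [Finset.sum_congr rfl h1, ← Finset.mul_sum, sum_powersetCard_one,
        Finset.sum_insert ha]
      nlinarith [ih]
    · intro t ht u hu htu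
      rw [Finset.mem_coe, Finset.mem_powersetCard] at ht hu
      have hat : a ∉ t := fun h => ha (ht.1 h)
      have hau : a ∉ u := fun h => ha (hu.1 h)
      rw [← Finset.erase_insert hat, ← Finset.erase_insert hau, htu]
    · rw [Finset.disjoint_left]
      intro t ht htu
      rw [Finset.mem_powersetCard] at ht
      rw [Finset.mem_image] at htu
      obtain ⟨u, _, rfl⟩ := htu
      exact ha (ht.1 (Finset.mem_insert_self a u))

lemma variance_identity (n : ℕ) (x : Fin n → ℝ) :
    ∑ a : Fin n, ∑ b : Fin n, (x a - x b) ^ 2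
      = 2 * ((n : ℝ) * ∑ a, x a ^ 2 - (∑ a, x a) ^ 2) := by
  have h : ∀ a : Fin n, ∑ b : Fin n, (x a - x b) ^ 2
      = (n : ℝ) * x a ^ 2 - 2 * x a * (∑ b, x b) + ∑ b, x b ^ 2 := by
    intro a
    have : ∀ b : Fin n, (x a - x b) ^ 2 = x a ^ 2 - 2 * x a * x b + x b ^ 2 := fun b => by ring
    rw [Finset.sum_congr rfl fun b _ => this b, Finset.sum_add_distrib, Finset.sum_sub_distrib,
      Finset.sum_const, Finset.card_univ, Fintype.card_fin, nsmul_eq_mul, ← Finset.mul_sum]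
  rw [Finset.sum_congr rfl fun a _ => h a, Finset.sum_add_distrib, Finset.sum_sub_distrib]
  simp only [← Finset.sum_mul, ← Finset.mul_sum, Finset.sum_const, Finset.card_univ,
    Fintype.card_fin, nsmul_eq_mul]
  ring

lemma variance_nonneg (n : ℕ) (x : Fin n → ℝ) :
    (∑ a, x a) ^ 2 ≤ (n : ℝ) * ∑ a, x a ^ 2 := by
  nlinarith [variance_identity n x,
    Finset.sum_nonneg (fun a (_ : a ∈ Finset.univ) =>
      Finset.sum_nonneg (fun b (_ : b ∈ Finset.univ) => sq_nonneg (x a - x b)))]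

lemma variance_eq (n : ℕ) (x : Fin n → ℝ)
    (h : (∑ a, x a) ^ 2 = (n : ℝ) * ∑ a, x a ^ 2) : ∀ a b : Fin n, x a = x b := by
  have h0 : ∑ a : Fin n, ∑ b : Fin n, (x a - x b) ^ 2 = 0 := by
    rw [variance_identity n x]; linarith
  intro a b
  have h1 : ∀ a : Fin n, ∑ b : Fin n, (x a - x b) ^ 2 = 0 := by
    intro a'
    have := (Finset.sum_eq_zero_iff_of_nonneg (fun c _ =>
      Finset.sum_nonneg (fun b (_ : b ∈ Finset.univ) => sq_nonneg (x c - x b)))).mp h0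
    exact this a' (Finset.mem_univ a')
  have h2 := (Finset.sum_eq_zero_iff_of_nonneg (fun c (_ : c ∈ Finset.univ) =>
    sq_nonneg (x a - x c))).mp (h1 a) b (Finset.mem_univ b)
  have := sq_eq_zero_iff.mp h2
  linarith

lemma normESymm_of_const (N k : ℕ) (hk : k ≤ N) (x : Fin N → ℝ) (c : ℝ)
    (h : ∀ r, x r = c) : normESymm N k x = c ^ k := by
  rw [normESymm]
  have h1 : ∀ s ∈ Finset.univ.powersetCard k, ∏ i ∈ s, x i = c ^ k := by
    intro s hs
    rw [Finset.mem_powersetCard_univ] at hs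
    rw [Finset.prod_congr rfl (fun i _ => h i), Finset.prod_const, hs]
  rw [Finset.sum_congr rfl h1, Finset.sum_const, Finset.card_powersetCard, Finset.card_univ,
    Fintype.card_fin, nsmul_eq_mul]
  rw [← mul_assoc, inv_mul_cancel₀, one_mul]
  exact_mod_cast (Nat.choose_pos hk).ne'

lemma normESymm_top (n : ℕ) (lam : Fin n → ℝ) : normESymm n n lam = ∏ r, lam r := by
  rw [normESymm]
  have h : (Finset.univ : Finset (Fin n)).powersetCard n = {Finset.univ} := by
    have := Finset.powersetCard_self (Finset.univ : Finset (Fin n))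
    rwa [Finset.card_univ, Fintype.card_fin] at this
  rw [h, Finset.sum_singleton, Nat.choose_self]
  simp

lemma sum_powersetCard_compl (n k : ℕ) (hk : k ≤ n) (f : Fin n → ℝ) :
    ∑ s ∈ Finset.univ.powersetCard (n - k), ∏ i ∈ s, f i
      = ∑ t ∈ Finset.univ.powersetCard k, ∏ i ∈ tᶜ, f i := by
  refine Finset.sum_nbij' (fun s => sᶜ) (fun t => tᶜ) ?_ ?_ ?_ ?_ ?_
  · intro s hs
    rw [Finset.mem_powersetCard_univ] at hs ⊢
    rw [Finset.card_compl, Fintype.card_fin, hs]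
    omega
  · intro t ht
    rw [Finset.mem_powersetCard_univ] at ht ⊢
    rw [Finset.card_compl, Fintype.card_fin, ht]
  · intro s _; exact compl_compl s
  · intro t _; exact compl_compl t
  · intro s _
    rw [compl_compl]

lemma newton_top (n : ℕ) (hn : 2 ≤ n) (lam : Fin n → ℝ) :
    normESymm n (n-2) lam * normESymm n n lam ≤ normESymm n (n-1) lam ^ 2 ∧
    (normESymm n (n-2) lam * normESymm n n lam = normESymm n (n-1) lam ^ 2 →
      normESymm n n lam ≠ 0 → ∀ a b : Fin n, lam a = lam b) := by
  by_cases hz : ∃ r, lam r = 0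
  · obtain ⟨r, hr⟩ := hz
    have hP : normESymm n n lam = 0 := by
      rw [normESymm_top]; exact Finset.prod_eq_zero (Finset.mem_univ r) hr
    refine ⟨by rw [hP, mul_zero]; positivity, fun _ hne => absurd hP hne⟩
  · push_neg at hz
    set μ : Fin n → ℝ := fun r => (lam r)⁻¹ with hμ
    have hprodne : (∏ r, lam r) ≠ 0 := Finset.prod_ne_zero_iff.mpr (fun r _ => hz r)
    have key : ∀ j, j ≤ n → (∑ s ∈ Finset.univ.powersetCard (n - j), ∏ i ∈ s, lam i)
        = (∏ r, lam r) * ∑ s ∈ Finset.univ.powersetCard j, ∏ i ∈ s, μ i := by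
      intro j hj
      rw [sum_powersetCard_compl n j hj, Finset.mul_sum]
      refine Finset.sum_congr rfl fun t _ => ?_
      have h2 : (∏ i ∈ t, lam i) ≠ 0 := Finset.prod_ne_zero_iff.mpr fun i _ => hz i
      have h3 : (∏ i ∈ tᶜ, lam i) * (∏ i ∈ t, lam i) = ∏ r, lam r :=
        Finset.prod_compl_mul_prod t lam
      have : ∏ i ∈ t, μ i = (∏ i ∈ t, lam i)⁻¹ := by
        rw [hμ]; exact Finset.prod_inv_distrib (f := lam)
      rw [this, eq_mul_inv_iff_mul_eq₀ h2]
      exact h3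
    have en1 : normESymm n (n-1) lam = (∏ r, lam r) * normESymm n 1 μ := by
      rw [normESymm, normESymm, ← Nat.choose_symm (show 1 ≤ n by omega), key 1 (by omega)]
      ring
    have en2 : normESymm n (n-2) lam = (∏ r, lam r) * normESymm n 2 μ := by
      rw [normESymm, normESymm, ← Nat.choose_symm (show 2 ≤ n by omega), key 2 (by omega)]
      ring
    have en : normESymm n n lam = ∏ r, lam r := normESymm_top n lam
    set S1 := ∑ r, μ r with hS1
    set S2 := ∑ r, μ r ^ 2 with hS2
    set E2 := ∑ s ∈ Finset.univ.powersetCard 2, ∏ i ∈ s, μ i with hE2def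
    have hP1 : normESymm n 1 μ = ((n:ℝ))⁻¹ * S1 := by
      rw [normESymm, sum_powersetCard_one, Nat.choose_one_right]
    have hP2 : normESymm n 2 μ = ((n.choose 2 : ℝ))⁻¹ * E2 := by rw [normESymm]
    have hE2 : 2 * E2 = S1 ^ 2 - S2 := sum_powersetCard_two _ _
    have hvar : S1 ^ 2 ≤ (n:ℝ) * S2 := variance_nonneg n μ
    have hc2 : (n.choose 2 : ℝ) * 2 = (n:ℝ) * ((n:ℝ) - 1) := by
      have h' : n.choose 2 * 2 = n * (n - 1) := by
        rw [Nat.choose_succ_right_eq n 1, Nat.choose_one_right]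
      have h'' : (n.choose 2 : ℝ) * 2 = (n : ℝ) * (((n-1 : ℕ)) : ℝ) := by exact_mod_cast h'
      rwa [Nat.cast_sub (by omega), Nat.cast_one] at h''
    have hc2pos : (0:ℝ) < (n.choose 2 : ℝ) := by
      exact_mod_cast Nat.choose_pos hn
    have hnpos : (0:ℝ) < (n:ℝ) := by positivity
    have hiden : (n.choose 2 : ℝ) * (n:ℝ)^2 * (normESymm n 1 μ ^ 2 - normESymm n 2 μ)
        = ((n:ℝ)/2) * ((n:ℝ) * S2 - S1^2) := by
      rw [hP1, hP2]
      field_simp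
      linear_combination S1^2 * hc2 - (n:ℝ)^2 * hE2
    have h9 : 0 ≤ ((n:ℝ)/2) * ((n:ℝ) * S2 - S1^2) := by nlinarith [hvar, hnpos]
    have hdiffnonneg : 0 ≤ normESymm n 1 μ ^ 2 - normESymm n 2 μ := by
      nlinarith [hiden, h9, mul_pos hc2pos (pow_pos hnpos 2)]
    constructor
    · rw [en1, en2, en]
      nlinarith [mul_nonneg (sq_nonneg (∏ r, lam r)) hdiffnonneg]
    · intro heq _
      have hsq : (0:ℝ) < (∏ r, lam r)^2 := by positivity
      rw [en1, en2, en] at heq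
      have h10 : (∏ r, lam r)^2 * (normESymm n 1 μ ^ 2 - normESymm n 2 μ) = 0 := by
        linear_combination -heq
      have hzero : normESymm n 1 μ ^ 2 - normESymm n 2 μ = 0 :=
        (mul_eq_zero.mp h10).resolve_left hsq.ne'
      rw [hzero, mul_zero] at hiden
      have h11 := (mul_eq_zero.mp hiden.symm).resolve_left (by positivity)
      have hS : S1 ^ 2 = (n:ℝ) * S2 := by linarith
      have hμeq := variance_eq n μ hS
      intro a b
      have := hμeq a b
      have : (lam a)⁻¹ = (lam b)⁻¹ := this
      exact inv_injective this

lemma choose_two_cast (n : ℕ) (hn : 1 ≤ n) : ((n.choose 2 : ℕ) : ℝ) * 2 = (n:ℝ) * ((n:ℝ) - 1) := by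
  have h' : n.choose 2 * 2 = n * (n - 1) := by
    rw [Nat.choose_succ_right_eq n 1, Nat.choose_one_right]
  have h'' : (n.choose 2 : ℝ) * 2 = (n : ℝ) * (((n-1 : ℕ)) : ℝ) := by exact_mod_cast h'
  rwa [Nat.cast_sub hn, Nat.cast_one] at h''

open Polynomial in
theorem newton_aux (n : ℕ) : ∀ (lam : Fin n → ℝ) (i : ℕ), 1 ≤ i → i + 1 ≤ n →
    normESymm n (i-1) lam * normESymm n (i+1) lam ≤ normESymm n i lam ^ 2 ∧
    (normESymm n (i-1) lam * normESymm n (i+1) lam = normESymm n i lam ^ 2 →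
      normESymm n (i+1) lam ≠ 0 → ∀ a b : Fin n, lam a = lam b) := by
  induction n using Nat.strong_induction_on with
  | _ n ih =>
  intro lam i h1 h2
  rcases eq_or_lt_of_le h2 with hn | hn
  · obtain ⟨b1, b2⟩ := newton_top n (by omega) lam
    rw [show i + 1 = n from hn, show i - 1 = n - 2 by omega, show i = n - 1 by omega]
    exact ⟨b1, b2⟩
  · -- step case : i + 1 < n, n ≥ 3
    have hn3 : 3 ≤ n := by omega
    set M : Multiset ℝ := Multiset.map lam Finset.univ.val with hMdef
    have hM : Multiset.card M = n := by simp [hMdef]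
    set Q : ℝ[X] := (M.map fun a => X - C a).prod with hQdef
    have hmonic : Q.Monic := monic_multiset_prod_of_monic _ _ (fun a _ => monic_X_sub_C a)
    have hdeg : Q.natDegree = n := by
      rw [hQdef, natDegree_multiset_prod_X_sub_C_eq_card, hM]
    have hQroots : Q.roots = M := roots_multiset_prod_X_sub_C M
    have hd1 : (derivative Q).natDegree ≤ n - 1 := by
      have := natDegree_derivative_le Q
      omega
    have hcard : Multiset.card (derivative Q).roots = n - 1 := by
      have hle := (card_roots' (derivative Q)).trans hd1
      have hge := card_roots_le_derivative Q
      rw [hQroots, hM] at hge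
      omega
    have hdeg' : (derivative Q).natDegree = n - 1 := by
      have := card_roots' (derivative Q)
      omega
    have hlc : (derivative Q).leadingCoeff = (n : ℝ) := by
      have h := coeff_derivative Q (n-1)
      rw [show n - 1 + 1 = n by omega] at h
      rw [Polynomial.leadingCoeff, hdeg', h]
      have : Q.coeff n = 1 := by
        have := hmonic.coeff_natDegree
        rwa [hdeg] at this
      rw [this, one_mul]
      push_cast [Nat.cast_sub (show 1 ≤ n by omega)]
      ring
    set t : Multiset ℝ := (derivative Q).roots with htdef
    have key : ∀ e, e ≤ n - 1 → (n : ℝ) * t.esymm e = ((n - e : ℕ) : ℝ) * M.esymm e := by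
      intro e he
      have hroots_eq : Multiset.card (derivative Q).roots = (derivative Q).natDegree := by
        rw [hcard, hdeg']
      have c3 := Polynomial.coeff_eq_esymm_roots_of_card hroots_eq
        (show n - 1 - e ≤ (derivative Q).natDegree by omega)
      rw [hdeg', show n - 1 - (n - 1 - e) = e by omega, hlc] at c3
      have c1 := coeff_derivative Q (n - 1 - e)
      rw [show n - 1 - e + 1 = n - e by omega] at c1
      have c2 := Multiset.prod_X_sub_C_coeff M (show n - e ≤ Multiset.card M by omega)
      rw [hM, show n - (n - e) = e by omega] at c2
      rw [← hQdef] at c2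
      rw [c2] at c1
      rw [c1] at c3
      have hfac : ((n - 1 - e : ℕ) : ℝ) + 1 = ((n - e : ℕ) : ℝ) := by
        push_cast [Nat.cast_sub (show e ≤ n - 1 by omega), Nat.cast_sub (show e ≤ n by omega),
          Nat.cast_sub (show 1 ≤ n by omega)]
        ring
      rw [hfac, ← htdef] at c3
      apply mul_left_cancel₀ (pow_ne_zero e (by norm_num : (-1:ℝ) ≠ 0))
      linear_combination -c3
    set lst : List ℝ := t.toList with hlstdef
    have hlen : lst.length = n - 1 := by rw [hlstdef, Multiset.length_toList, hcard]
    set mu : Fin lst.length → ℝ := lst.get with hmudef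
    have hmuval : Multiset.map mu Finset.univ.val = t := by
      rw [hmudef, Fin.univ_val_map, List.ofFn_get, hlstdef, Multiset.coe_toList]
    have hPP : ∀ e, e ≤ n - 1 → normESymm lst.length e mu = normESymm n e lam := by
      intro e he
      rw [normESymm_eq_esymm, normESymm_eq_esymm, hmuval, ← hMdef]
      have hc1 : ((lst.length.choose e : ℕ) : ℝ) ≠ 0 := by
        exact_mod_cast (Nat.choose_pos (by omega : e ≤ lst.length)).ne'
      have hc2 : ((n.choose e : ℕ) : ℝ) ≠ 0 := by
        exact_mod_cast (Nat.choose_pos (by omega : e ≤ n)).ne'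
      have hn0 : (n : ℝ) ≠ 0 := by positivity
      have hcid : (lst.length.choose e : ℕ) * n = n.choose e * (n - e) := by
        have := Nat.choose_mul_succ_eq (n-1) e
        rw [show n - 1 + 1 = n by omega] at this
        rw [hlen]
        exact this
      have hcidR : ((lst.length.choose e : ℕ) : ℝ) * (n : ℝ)
          = ((n.choose e : ℕ) : ℝ) * ((n - e : ℕ) : ℝ) := by exact_mod_cast hcid
      have hmain : ((n.choose e : ℕ) : ℝ) * t.esymm e
          = ((lst.length.choose e : ℕ) : ℝ) * M.esymm e := by
        apply mul_left_cancel₀ hn0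
        linear_combination ((n.choose e : ℕ) : ℝ) * key e he - M.esymm e * hcidR
      field_simp
      linear_combination hmain
    obtain ⟨ih1, ih2⟩ := ih lst.length (by omega) mu i h1 (by omega)
    rw [hPP (i-1) (by omega), hPP i (by omega), hPP (i+1) (by omega)] at ih1 ih2
    refine ⟨ih1, fun heq hne => ?_⟩
    have hmueq := ih2 heq hne
    have hpos0 : 0 < lst.length := by omega
    set c : ℝ := mu ⟨0, hpos0⟩ with hcdef
    have hc : ∀ r, mu r = c := fun r => hmueq r ⟨0, hpos0⟩
    have hP1 : normESymm n 1 lam = c := by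
      rw [← hPP 1 (by omega), normESymm_of_const lst.length 1 (by omega) mu c hc, pow_one]
    have hP2 : normESymm n 2 lam = c ^ 2 := by
      rw [← hPP 2 (by omega), normESymm_of_const lst.length 2 (by omega) mu c hc]
    have hn0 : (n : ℝ) ≠ 0 := by positivity
    have hS1 : ∑ r, lam r = (n : ℝ) * c := by
      rw [normESymm, sum_powersetCard_one, Nat.choose_one_right] at hP1
      field_simp at hP1
      linarith [hP1]
    have hcc2 : ((n.choose 2 : ℕ) : ℝ) ≠ 0 := by
      exact_mod_cast (Nat.choose_pos (by omega : 2 ≤ n)).ne'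
    have hE2 : ∑ s ∈ Finset.univ.powersetCard 2, ∏ i ∈ s, lam i
        = ((n.choose 2 : ℕ) : ℝ) * c ^ 2 := by
      rw [normESymm] at hP2
      field_simp at hP2
      linarith [hP2]
    have hch2 := choose_two_cast n (by omega)
    have hS2 : ∑ r, (lam r) ^ 2 = (n : ℝ) * c ^ 2 := by
      have h2 := sum_powersetCard_two (Finset.univ : Finset (Fin n)) lam
      rw [hE2, hS1] at h2
      nlinarith [h2, hch2]
    have hzero : ∑ r, (lam r - c) ^ 2 = 0 := by
      have hexp : ∀ r : Fin n, (lam r - c) ^ 2 = (lam r) ^ 2 - 2 * c * lam r + c ^ 2 :=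
        fun r => by ring
      rw [Finset.sum_congr rfl fun r _ => hexp r, Finset.sum_add_distrib,
        Finset.sum_sub_distrib, ← Finset.mul_sum, Finset.sum_const, Finset.card_univ,
        Fintype.card_fin, nsmul_eq_mul, hS1, hS2]
      ring
    have hall : ∀ r : Fin n, lam r = c := by
      intro r
      have := (Finset.sum_eq_zero_iff_of_nonneg
        (fun r (_ : r ∈ Finset.univ) => sq_nonneg (lam r - c))).mp hzero r (Finset.mem_univ r)
      have := sq_eq_zero_iff.mp this
      linarith
    intro a b
    rw [hall a, hall b]

lemma interp_main (n k l m : ℕ) (hkl : k < l) (hln : l ≤ n) (α β : ℝ)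
    (hα0 : 0 < α) (hβ0 : 0 < β) (hαβ : α + β = 1)
    (hm : (m : ℝ) = (k : ℝ) * α + (l : ℝ) * β)
    (lam : Fin n → ℝ) (hpos : ∀ j : ℕ, 1 ≤ j → j ≤ l → 0 < normESymm n j lam) :
    normESymm n m lam ≥ normESymm n k lam ^ α * normESymm n l lam ^ β ∧
    (normESymm n m lam = normESymm n k lam ^ α * normESymm n l lam ^ β ↔
      ∀ i j : Fin n, lam i = lam j) := by
  have pos : ∀ j : ℕ, j ≤ l → 0 < normESymm n j lam := by
    intro j hj
    rcases Nat.eq_zero_or_pos j with h0 | h0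
    · rw [h0, normESymm_zero]; norm_num
    · exact hpos j h0 hj
  have hkr : (k:ℝ) < l := by exact_mod_cast hkl
  have hmkR : (m:ℝ) - k = ((l:ℝ) - k) * β := by linear_combination hm + (k:ℝ) * hαβ
  have hmlR : (l:ℝ) - m = ((l:ℝ) - k) * α := by linear_combination -hm - (l:ℝ) * hαβ
  have hkm : k < m := by
    have : (k:ℝ) < m := by nlinarith [mul_pos (sub_pos.mpr hkr) hβ0]
    exact_mod_cast this
  have hml : m < l := by
    have : (m:ℝ) < l := by nlinarith [mul_pos (sub_pos.mpr hkr) hα0]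
    exact_mod_cast this
  set L : ℕ → ℝ := fun j => Real.log (normESymm n j lam) with hL
  set d : ℕ → ℝ := fun j => L (j+1) - L j with hd
  have hstep : ∀ j : ℕ, 1 ≤ j → j + 1 ≤ l → d j ≤ d (j-1) := by
    intro j hj1 hj2
    have hN := (newton_aux n lam j hj1 (by omega)).1
    have hlog := (Real.log_le_log_iff
      (mul_pos (pos (j-1) (by omega)) (pos (j+1) (by omega)))
      (pow_pos (pos j (by omega)) 2)).mpr hN
    rw [Real.log_mul (pos (j-1) (by omega)).ne' (pos (j+1) (by omega)).ne',
      Real.log_pow] at hlog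
    simp only [hd, hL]
    rw [show j - 1 + 1 = j by omega]
    push_cast at hlog
    linarith
  have anti : ∀ b : ℕ, b + 1 ≤ l → ∀ a : ℕ, a ≤ b → d b ≤ d a := by
    intro b
    induction b with
    | zero => intro _ a ha; rw [Nat.le_zero.mp ha]
    | succ b ihb =>
      intro hb a ha
      have hdd := hstep (b+1) (by omega) (by omega)
      rw [show b + 1 - 1 = b by omega] at hdd
      rcases Nat.eq_or_lt_of_le ha with rfl | hlt
      · exact le_refl _
      · exact le_trans hdd (ihb (by omega) a (by omega))
  have tel : ∀ a b : ℕ, a ≤ b → ∑ j ∈ Finset.Ico a b, d j = L b - L a := by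
    intro a b hab
    rw [Finset.sum_Ico_eq_sub _ hab]
    have h1 := Finset.sum_range_sub L b
    have h2 := Finset.sum_range_sub L a
    simp only [hd]
    rw [h1, h2]
    ring
  have b1 : ((m - k : ℕ) : ℝ) * d (m-1) ≤ L m - L k := by
    rw [← tel k m hkm.le]
    have h := Finset.card_nsmul_le_sum (Finset.Ico k m) d (d (m-1))
      (fun j hj => by
        rw [Finset.mem_Ico] at hj
        exact anti (m-1) (by omega) j (by omega))
    rwa [Nat.card_Ico, nsmul_eq_mul] at h
  have b2 : L l - L m ≤ ((l - m : ℕ) : ℝ) * d m := by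
    rw [← tel m l hml.le]
    have h := Finset.sum_le_card_nsmul (Finset.Ico m l) d (d m)
      (fun j hj => by
        rw [Finset.mem_Ico] at hj
        exact anti j (by omega) m (by omega))
    rwa [Nat.card_Ico, nsmul_eq_mul] at h
  have b3 : d m ≤ d (m-1) := by
    have := hstep m (by omega) (by omega)
    exact this
  have hc1 : ((m - k : ℕ) : ℝ) = (m:ℝ) - k := by
    push_cast [Nat.cast_sub hkm.le]; ring
  have hc2 : ((l - m : ℕ) : ℝ) = (l:ℝ) - m := by
    push_cast [Nat.cast_sub hml.le]; ring
  rw [hc1] at b1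
  rw [hc2] at b2
  have hmkpos : (0:ℝ) < (m:ℝ) - k := by
    have : (k:ℝ) < m := by exact_mod_cast hkm
    linarith
  have hmlpos : (0:ℝ) < (l:ℝ) - m := by
    have : (m:ℝ) < l := by exact_mod_cast hml
    linarith
  have T1 : ((m:ℝ) - k) * (L l - L m) ≤ ((m:ℝ) - k) * (((l:ℝ) - m) * d m) :=
    mul_le_mul_of_nonneg_left b2 hmkpos.le
  have T2 : ((m:ℝ) - k) * (((l:ℝ) - m) * d m) ≤ ((m:ℝ) - k) * (((l:ℝ) - m) * d (m-1)) := by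
    rw [← mul_assoc, ← mul_assoc]
    exact mul_le_mul_of_nonneg_left b3 (mul_pos hmkpos hmlpos).le
  have T3 : ((l:ℝ) - m) * (((m:ℝ) - k) * d (m-1)) ≤ ((l:ℝ) - m) * (L m - L k) :=
    mul_le_mul_of_nonneg_left b1 hmlpos.le
  have T3' : ((m:ℝ) - k) * (((l:ℝ) - m) * d (m-1)) ≤ ((l:ℝ) - m) * (L m - L k) := by
    rw [show ((m:ℝ) - k) * (((l:ℝ) - m) * d (m-1))
        = ((l:ℝ) - m) * (((m:ℝ) - k) * d (m-1)) by ring]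
    exact T3
  have goal1 : ((m:ℝ) - k) * (L l - L m) ≤ ((l:ℝ) - m) * (L m - L k) :=
    le_trans (le_trans T1 T2) T3'
  have hlkpos : (0:ℝ) < (l:ℝ) - k := by linarith
  have h5 : β * (L l - L m) ≤ α * (L m - L k) := by
    rw [hmkR, hmlR, mul_assoc, mul_assoc] at goal1
    exact le_of_mul_le_mul_left goal1 hlkpos
  have hLineq : α * L k + β * L l ≤ L m := by
    have hsum : α * L m + β * L m = L m := by linear_combination (L m) * hαβ
    linarith
  have hPkrw : normESymm n k lam ^ α = Real.exp (α * L k) := by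
    rw [Real.rpow_def_of_pos (pos k (by omega)), mul_comm]
  have hPlrw : normESymm n l lam ^ β = Real.exp (β * L l) := by
    rw [Real.rpow_def_of_pos (pos l le_rfl), mul_comm]
  have hPmrw : normESymm n m lam = Real.exp (L m) := (Real.exp_log (pos m hml.le)).symm
  constructor
  · rw [hPkrw, hPlrw, ← Real.exp_add, ge_iff_le, hPmrw]
    exact Real.exp_le_exp.mpr (by linarith)
  constructor
  · intro heq
    rw [hPkrw, hPlrw, ← Real.exp_add] at heq
    have hLeq : L m = α * L k + β * L l := by
      have := congrArg Real.log heq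
      rw [Real.log_exp] at this
      exact this
    have e0 : β * (L l - L m) = α * (L m - L k) := by
      linear_combination -hLeq - (L m) * hαβ
    have e1 : ((m:ℝ) - k) * (L l - L m) = ((l:ℝ) - m) * (L m - L k) := by
      rw [hmkR, hmlR]
      linear_combination ((l:ℝ) - k) * e0
    have hle : d (m-1) ≤ d m := by
      have hA : ((m:ℝ) - k) * ((l:ℝ) - m) * d (m-1) ≤ ((m:ℝ) - k) * ((l:ℝ) - m) * d m := by
        rw [show ((m:ℝ) - k) * ((l:ℝ) - m) * d (m-1)
            = ((l:ℝ) - m) * (((m:ℝ) - k) * d (m-1)) by ring,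
          show ((m:ℝ) - k) * ((l:ℝ) - m) * d m = ((m:ℝ) - k) * (((l:ℝ) - m) * d m) by ring]
        calc ((l:ℝ) - m) * (((m:ℝ) - k) * d (m-1)) ≤ ((l:ℝ) - m) * (L m - L k) := T3
        _ = ((m:ℝ) - k) * (L l - L m) := e1.symm
        _ ≤ ((m:ℝ) - k) * (((l:ℝ) - m) * d m) := T1
      rw [show ((m:ℝ) - k) * ((l:ℝ) - m) * d (m-1)
          = (((m:ℝ) - k) * ((l:ℝ) - m)) * d (m-1) by ring,
        show ((m:ℝ) - k) * ((l:ℝ) - m) * d m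
          = (((m:ℝ) - k) * ((l:ℝ) - m)) * d m by ring] at hA
      exact le_of_mul_le_mul_left hA (mul_pos hmkpos hmlpos)
    have hdm : d (m-1) = d m := le_antisymm hle b3
    have hNeq : normESymm n (m-1) lam * normESymm n (m+1) lam = normESymm n m lam ^ 2 := by
      have hlogeq : Real.log (normESymm n (m-1) lam * normESymm n (m+1) lam)
          = Real.log (normESymm n m lam ^ 2) := by
        rw [Real.log_mul (pos (m-1) (by omega)).ne' (pos (m+1) (by omega)).ne', Real.log_pow]
        simp only [hd, hL] at hdm
        rw [show m - 1 + 1 = m by omega] at hdm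
        push_cast
        linarith
      have := congrArg Real.exp hlogeq
      rwa [Real.exp_log (mul_pos (pos (m-1) (by omega)) (pos (m+1) (by omega))),
        Real.exp_log (pow_pos (pos m (by omega)) 2)] at this
    exact (newton_aux n lam m (by omega) (by omega)).2 hNeq (pos (m+1) (by omega)).ne'
  · intro hall
    have hn1 : 1 ≤ n := by omega
    set c : ℝ := lam ⟨0, by omega⟩ with hcdef
    have hc : ∀ r, lam r = c := fun r => hall r ⟨0, by omega⟩
    have hcpos : 0 < c := by
      have := pos 1 (by omega)
      rwa [normESymm_of_const n 1 (by omega) lam c hc, pow_one] at this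
    rw [normESymm_of_const n m (by omega) lam c hc, normESymm_of_const n k (by omega) lam c hc,
      normESymm_of_const n l hln lam c hc]
    rw [← Real.rpow_natCast c k, ← Real.rpow_natCast c l, ← Real.rpow_natCast c m,
      ← Real.rpow_mul hcpos.le, ← Real.rpow_mul hcpos.le, ← Real.rpow_add hcpos, ← hm]

/-- For `λ ∈ Γ_k ∩ Γ_l` and `m = kα + lβ` with `α + β = 1`, `α, β ∈ (0,1)`,
one has `P_m(λ) ≥ P_k(λ)^α · P_l(λ)^β`, with equality iff all `λ_i` are equal. -/
theorem normESymm_interpolation (n k l : ℕ) (hn : 1 ≤ n) (hk : k ≤ n) (hl : l ≤ n)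
    (hkl : k ≠ l) (α β : ℝ) (hα0 : 0 < α) (hα1 : α < 1) (hβ0 : 0 < β) (hβ1 : β < 1)
    (hαβ : α + β = 1) (m : ℕ) (hm : (m : ℝ) = (k : ℝ) * α + (l : ℝ) * β) (hmn : m ≤ n)
    (lam : Fin n → ℝ) (hlamk : lam ∈ gardingCone n k) (hlaml : lam ∈ gardingCone n l) :
    normESymm n m lam ≥ normESymm n k lam ^ α * normESymm n l lam ^ β ∧
    (normESymm n m lam = normESymm n k lam ^ α * normESymm n l lam ^ β ↔
      ∀ i j : Fin n, lam i = lam j) := by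
  rcases lt_or_gt_of_ne hkl with h | h
  · exact interp_main n k l m h hl α β hα0 hβ0 hαβ hm lam (fun j hj1 hj2 => hlaml j hj1 hj2)
  · obtain ⟨w1, w2⟩ := interp_main n l k m h hk β α hβ0 hα0 (by linarith)
      (by rw [hm]; ring) lam (fun j hj1 hj2 => hlamk j hj1 hj2)
    constructor
    · rwa [mul_comm] at w1
    · rwa [mul_comm] at w2
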